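/- The number of strongly connected partial orientations of a connected multigraph G equals 2^{n−1} · T_G(1/2, 3), where n = |V(G)|. -/

import Mathlib

open Classical

noncomputable section

/-- A finite multigraph, given by a finite vertex type, a finite edge type, and
two endpoint maps (which also provide a built-in reference direction for each edge). -/
structure Multigraph where
  V : Type
  E : Type
  [fintypeV : Fintype V]
  [fintypeE : Fintype E]
  fst : E → V
  snd : E → V

attribute [instance] Multigraph.fintypeV Multigraph.fintypeE

namespace Multigraph

variable (G : Multigraph)

/-- Adjacency between vertices using only edges in `S`. -/
def adjOn (S : Set G.E) (u v : G.V) : Prop :=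
  ∃ e ∈ S, (G.fst e = u ∧ G.snd e = v) ∨ (G.fst e = v ∧ G.snd e = u)

/-- Reachability (in the undirected sense) using only edges in `S`. -/
def reachOn (S : Set G.E) : G.V → G.V → Prop :=
  Relation.ReflTransGen (G.adjOn S)

def Connected : Prop := ∀ u v : G.V, G.reachOn Set.univ u v

def IsLoop (e : G.E) : Prop := G.fst e = G.snd e

def IsBridge (e : G.E) : Prop := ¬ G.reachOn {f | f ≠ e} (G.fst e) (G.snd e)

/-- Number of connected components of the spanning subgraph with edge set `S`. -/
def comps (S : Set G.E) : ℕ := Nat.card (Quot (G.reachOn S))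

/-- Rank of an edge set: `|V|` minus the number of components it spans. -/
def rk (S : Set G.E) : ℕ := Fintype.card G.V - G.comps S

/-- The Tutte polynomial, via the corank-nullity (subgraph) expansion. -/
def tutte (x y : ℚ) : ℚ :=
  ∑ S : Finset G.E,
    (x - 1) ^ (G.rk Set.univ - G.rk (↑S : Set G.E)) * (y - 1) ^ (S.card - G.rk (↑S : Set G.E))

/-- The genus (cycle rank) `|E| - |V| + 1` of a connected multigraph. -/
def genus : ℕ := Fintype.card G.E + 1 - Fintype.card G.V

/-- A partial orientation: each edge is unoriented (`none`), oriented in the reference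
direction `fst → snd` (`some true`), or oriented oppositely (`some false`). -/
abbrev PartialOrientation := G.E → Option Bool

/-- The tail of edge `e` traversed in direction `b` (`true` = `fst → snd`). -/
def dtail (e : G.E) (b : Bool) : G.V := if b then G.fst e else G.snd e

/-- The head of edge `e` traversed in direction `b` (`true` = `fst → snd`). -/
def dhead (e : G.E) (b : Bool) : G.V := if b then G.snd e else G.fst e

/-- Directed adjacency under a partial orientation. -/
def dAdj (O : G.PartialOrientation) (u v : G.V) : Prop :=
  ∃ e b, O e = some b ∧ G.dtail e b = u ∧ G.dhead e b = v

/-- Directed reachability under a partial orientation. -/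
def dReach (O : G.PartialOrientation) : G.V → G.V → Prop :=
  Relation.ReflTransGen (G.dAdj O)

/-- A partial orientation is acyclic iff it contains no directed cycle, equivalently there
is no oriented edge together with a directed path from its head back to its tail. -/
def Acyclic (O : G.PartialOrientation) : Prop :=
  ¬ ∃ e b, O e = some b ∧ G.dReach O (G.dhead e b) (G.dtail e b)

/-- `e` crosses the cut determined by the vertex set `X`. -/
def crosses (X : Set G.V) (e : G.E) : Prop := ¬ ((G.fst e ∈ X) ↔ (G.snd e ∈ X))

/-- `(X, Xᶜ)` is a directed cut of `O`: the cut is nonempty and every crossing edge is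
oriented from `X` to `Xᶜ`. -/
def IsDirCut (O : G.PartialOrientation) (X : Set G.V) : Prop :=
  (∃ e, G.crosses X e) ∧
  ∀ e, G.crosses X e →
    (G.fst e ∈ X → O e = some true) ∧ (G.snd e ∈ X → O e = some false)

/-- A partial orientation is strongly connected iff it contains no directed cut. -/
def StronglyConnected (O : G.PartialOrientation) : Prop :=
  ¬ ∃ X, G.IsDirCut O X

/-- A directed cycle of `O`: a nonempty cyclically chained list of oriented steps using
pairwise distinct edges, each oriented in `O` as traversed. -/
def IsDCycle (O : G.PartialOrientation) (c : List (G.E × Bool)) : Prop :=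
  c ≠ [] ∧ (∀ s ∈ c, O s.1 = some s.2) ∧
  List.Chain' (fun s t => G.dhead s.1 s.2 = G.dtail t.1 t.2) (c ++ c.take 1) ∧
  (c.map Prod.fst).Nodup

/-- A half-open path: a directed path (all steps but the last oriented in `O`) followed by
an unoriented edge, imagined with the direction that would extend the path. -/
def IsHalfOpenPath (O : G.PartialOrientation) (p : List (G.E × Bool)) : Prop :=
  2 ≤ p.length ∧
  List.Chain' (fun s t => G.dhead s.1 s.2 = G.dtail t.1 t.2) p ∧
  (p.map Prod.fst).Nodup ∧
  (∀ s ∈ p.dropLast, O s.1 = some s.2) ∧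
  ∀ h : p ≠ [], O (p.getLast h).1 = none

/-- `O'` is obtained from `O` by reversing one directed cut. -/
def cutRev (O O' : G.PartialOrientation) : Prop :=
  ∃ X, G.IsDirCut O X ∧ (∀ e, ¬ G.crosses X e → O' e = O e) ∧
    (∀ e, G.crosses X e → O' e = (O e).map not)

/-- `O'` is obtained from `O` by reversing one directed cycle. -/
def cycleRev (O O' : G.PartialOrientation) : Prop :=
  ∃ c, G.IsDCycle O c ∧ (∀ e, e ∉ c.map Prod.fst → O' e = O e) ∧
    (∀ s ∈ c, O' s.1 = some (!s.2))

/-- `O'` is obtained from `O` by a Jacob's ladder cascade along a half-open path: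
the first edge becomes unoriented and all other edges get the reversed direction. -/
def cascade (O O' : G.PartialOrientation) : Prop :=
  ∃ p, G.IsHalfOpenPath O p ∧ (∀ e, e ∉ p.map Prod.fst → O' e = O e) ∧
    (∀ h : p ≠ [], O' (p.head h).1 = none) ∧
    (∀ s ∈ p.tail, O' s.1 = some (!s.2))

/-- An edge pivot at a vertex `v`: unorient an edge `e'` oriented into `v` and orient a
previously unoriented edge `e` toward `v`. -/
def pivot (O O' : G.PartialOrientation) : Prop :=
  ∃ e e' b b', e ≠ e' ∧ O e = none ∧ O e' = some b' ∧
    G.dhead e b = G.dhead e' b' ∧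
    O' e = some b ∧ O' e' = none ∧ ∀ f, f ≠ e → f ≠ e' → O' f = O f

/-- A directed cut of `O` is minimal w.r.t. `(<, A)` if its `<`-minimum crossing edge is
oriented as in the reference orientation `A`. -/
def MinimalCut [LinearOrder G.E] (A : G.E → Bool) (O : G.PartialOrientation)
    (X : Set G.V) : Prop :=
  ∃ e, G.crosses X e ∧ (∀ e', G.crosses X e' → e ≤ e') ∧ O e = some (A e)

/-- A partial orientation is cut minimal if every directed cut in it is minimal. -/
def CutMinimal [LinearOrder G.E] (A : G.E → Bool) (O : G.PartialOrientation) : Prop :=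
  ∀ X, G.IsDirCut O X → G.MinimalCut A O X

/-- A list of steps is minimal w.r.t. `(<, A)` if its `<`-minimum edge is traversed in the
direction given by the reference orientation `A`. -/
def MinimalSteps [LinearOrder G.E] (A : G.E → Bool) (c : List (G.E × Bool)) : Prop :=
  ∃ s ∈ c, (∀ t ∈ c, s.1 ≤ t.1) ∧ s.2 = A s.1

/-- A partial orientation is cycle minimal if every directed cycle in it is minimal. -/
def CycleMinimal [LinearOrder G.E] (A : G.E → Bool) (O : G.PartialOrientation) : Prop :=
  ∀ c, G.IsDCycle O c → G.MinimalSteps A c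

/-- A partial orientation is cycle-path minimal if every directed cycle and every
half-open path in it is minimal. -/
def CyclePathMinimal [LinearOrder G.E] (A : G.E → Bool) (O : G.PartialOrientation) : Prop :=
  G.CycleMinimal A O ∧ ∀ p, G.IsHalfOpenPath O p → G.MinimalSteps A p

/-- The indegree of a vertex: the number of edges oriented toward it. -/
def indeg (O : G.PartialOrientation) (v : G.V) : ℕ :=
  Nat.card {e : G.E // ∃ b, O e = some b ∧ G.dhead e b = v}

/-- Orient the (previously unoriented) edge `e` in direction `b`. -/
def orient (O : G.PartialOrientation) (e : G.E) (b : Bool) : G.PartialOrientation :=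
  fun f => if f = e then some b else O f

/-- Deletion of the edge `e`. -/
def deleteEdge (e : G.E) : Multigraph where
  V := G.V
  E := {f : G.E // f ≠ e}
  fintypeE := Subtype.fintype _
  fst := fun f => G.fst f.1
  snd := fun f => G.snd f.1

/-- Contraction of the edge `e`: identify its two endpoints and remove `e`. -/
def contractEdge (e : G.E) : Multigraph where
  V := Quot (fun a b => a = G.fst e ∧ b = G.snd e)
  E := {f : G.E // f ≠ e}
  fintypeV := Fintype.ofSurjective (Quot.mk _) (Quot.mk_surjective)
  fintypeE := Subtype.fintype _
  fst := fun f => Quot.mk _ (G.fst f.1)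
  snd := fun f => Quot.mk _ (G.snd f.1)

/-- The number of acyclic partial orientations of `G`. -/
def numAcyclic : ℕ := Nat.card {O : G.PartialOrientation // G.Acyclic O}

/-- The number of strongly connected partial orientations of `G`. -/
def numStrong : ℕ := Nat.card {O : G.PartialOrientation // G.StronglyConnected O}


/-! ### Auxiliary lemmas -/

section Aux

variable {G : Multigraph}

theorem adjOn_symm {S : Set G.E} {u v : G.V} (h : G.adjOn S u v) : G.adjOn S v u := by
  obtain ⟨e, he, h | h⟩ := h
  · exact ⟨e, he, Or.inr h⟩
  · exact ⟨e, he, Or.inl h⟩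

theorem reachOn_symm {S : Set G.E} {u v : G.V} (h : G.reachOn S u v) : G.reachOn S v u := by
  induction h with
  | refl => exact Relation.ReflTransGen.refl
  | tail _ hadj ih => exact Relation.ReflTransGen.head (adjOn_symm hadj) ih

theorem reachOn_trans {S : Set G.E} {u v w : G.V} (h : G.reachOn S u v)
    (h' : G.reachOn S v w) : G.reachOn S u w := Relation.ReflTransGen.trans h h'

theorem reachOn_equivalence (S : Set G.E) : Equivalence (G.reachOn S) :=
  ⟨fun _ => Relation.ReflTransGen.refl, reachOn_symm, reachOn_trans⟩

theorem reachOn_mono {S T : Set G.E} (hST : S ⊆ T) {u v : G.V} (h : G.reachOn S u v) :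
    G.reachOn T u v := by
  induction h with
  | refl => exact Relation.ReflTransGen.refl
  | tail _ hadj ih =>
    obtain ⟨e, he, h⟩ := hadj
    exact Relation.ReflTransGen.tail ih ⟨e, hST he, h⟩

theorem quot_mk_eq_iff {S : Set G.E} {u v : G.V} :
    Quot.mk (G.reachOn S) u = Quot.mk (G.reachOn S) v ↔ G.reachOn S u v := by
  rw [Quot.eq]
  exact (reachOn_equivalence S).eqvGen_iff

/-- A path from inside `X` to outside `X` must cross `X`. -/
theorem exists_crossing {S : Set G.E} {X : Set G.V} {u v : G.V} (h : G.reachOn S u v)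
    (hu : u ∈ X) (hv : v ∉ X) : ∃ f ∈ S, G.crosses X f := by
  induction h with
  | refl => exact absurd hu hv
  | @tail c d hreach hadj ih =>
    by_cases hc : c ∈ X
    · obtain ⟨e, he, h | h⟩ := hadj
      · exact ⟨e, he, fun hiff => hv (h.2 ▸ (hiff.mp (h.1 ▸ hc)))⟩
      · exact ⟨e, he, fun hiff => hv (h.1 ▸ (hiff.mpr (h.2 ▸ hc)))⟩
    · exact ih hc

end Aux


section Comps

variable {G : Multigraph}

/-- The natural map between component quotients for `S ⊆ T`. -/
noncomputable def compMap (S T : Set G.E) (hST : S ⊆ T) :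
    Quot (G.reachOn S) → Quot (G.reachOn T) :=
  Quot.lift (Quot.mk _) (fun _ _ h => Quot.sound (reachOn_mono hST h))

theorem compMap_mk {S T : Set G.E} (hST : S ⊆ T) (u : G.V) :
    compMap S T hST (Quot.mk _ u) = Quot.mk _ u := rfl

theorem compMap_surjective {S T : Set G.E} (hST : S ⊆ T) :
    Function.Surjective (compMap S T hST) := by
  intro q
  obtain ⟨u, rfl⟩ := Quot.exists_rep q
  exact ⟨Quot.mk _ u, rfl⟩

theorem comps_anti {S T : Set G.E} (hST : S ⊆ T) : G.comps T ≤ G.comps S :=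
  Nat.card_le_card_of_surjective _ (compMap_surjective hST)

theorem comps_le_card (S : Set G.E) : G.comps S ≤ Fintype.card G.V := by
  rw [comps, ← Nat.card_eq_fintype_card]
  exact Nat.card_le_card_of_surjective _ Quot.mk_surjective

theorem comps_congr {S T : Set G.E} (h : ∀ u v, G.reachOn S u v ↔ G.reachOn T u v) :
    G.comps S = G.comps T := by
  have : G.reachOn S = G.reachOn T := funext fun u => funext fun v => propext (h u v)
  rw [comps, comps, this]

/-- Adding one edge merges at most two components. -/
theorem reach_insert_cases {S : Set G.E} {e : G.E} {a b : G.V}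
    (h : G.reachOn (insert e S) a b) :
    G.reachOn S a b ∨ (G.reachOn S a (G.fst e) ∧ G.reachOn S (G.snd e) b) ∨
      (G.reachOn S a (G.snd e) ∧ G.reachOn S (G.fst e) b) := by
  induction h with
  | refl => exact Or.inl Relation.ReflTransGen.refl
  | @tail c d hreach hadj ih =>
    obtain ⟨f, hf, hor⟩ := hadj
    rcases Set.mem_insert_iff.mp hf with rfl | hfS
    · -- the step uses the edge e itself
      rcases hor with ⟨h1, h2⟩ | ⟨h1, h2⟩
      · subst h1; subst h2
        rcases ih with h | ⟨ha, hb⟩ | ⟨ha, hb⟩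
        · exact Or.inr (Or.inl ⟨h, Relation.ReflTransGen.refl⟩)
        · exact Or.inr (Or.inl ⟨ha, Relation.ReflTransGen.refl⟩)
        · exact Or.inl ha
      · subst h1; subst h2
        rcases ih with h | ⟨ha, hb⟩ | ⟨ha, hb⟩
        · exact Or.inr (Or.inr ⟨h, Relation.ReflTransGen.refl⟩)
        · exact Or.inl ha
        · exact Or.inr (Or.inr ⟨ha, Relation.ReflTransGen.refl⟩)
    · -- the step uses an edge of S
      have hstep : G.adjOn S c d := ⟨f, hfS, hor⟩
      rcases ih with h | ⟨ha, hb⟩ | ⟨ha, hb⟩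
      · exact Or.inl (Relation.ReflTransGen.tail h hstep)
      · exact Or.inr (Or.inl ⟨ha, Relation.ReflTransGen.tail hb hstep⟩)
      · exact Or.inr (Or.inr ⟨ha, Relation.ReflTransGen.tail hb hstep⟩)

theorem comps_le_comps_insert_add_one (S : Set G.E) (e : G.E) :
    G.comps S ≤ G.comps (insert e S) + 1 := by
  classical
  set y0 : Quot (G.reachOn S) := Quot.mk _ (G.snd e) with hy0
  have hsub : S ⊆ insert e S := Set.subset_insert e S
  set f := compMap S (insert e S) hsub with hf
  have key : ∀ a b : Quot (G.reachOn S), f a = f b →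
      a = b ∨ (a = Quot.mk _ (G.fst e) ∧ b = y0) ∨ (a = y0 ∧ b = Quot.mk _ (G.fst e)) := by
    intro a b
    obtain ⟨u, rfl⟩ := Quot.exists_rep a
    obtain ⟨v, rfl⟩ := Quot.exists_rep b
    intro hab
    rw [hf, compMap_mk, compMap_mk, quot_mk_eq_iff] at hab
    rcases reach_insert_cases hab with h | ⟨h1, h2⟩ | ⟨h1, h2⟩
    · exact Or.inl (Quot.sound h)
    · exact Or.inr (Or.inl ⟨Quot.sound h1, (Quot.sound h2).symm⟩)
    · exact Or.inr (Or.inr ⟨Quot.sound h1, (Quot.sound (reachOn_symm h2))⟩)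
  have hinj : Function.Injective (fun a : Quot (G.reachOn S) =>
      if a = y0 then (Sum.inr () : Quot (G.reachOn (insert e S)) ⊕ Unit) else Sum.inl (f a)) := by
    intro a b hab
    by_cases ha : a = y0 <;> by_cases hb : b = y0 <;> simp [ha, hb] at hab
    · exact ha.trans hb.symm
    · rcases key a b hab with h | ⟨h1, h2⟩ | ⟨h1, h2⟩
      · exact h
      · exact absurd h2 hb
      · exact absurd h1 ha
  calc G.comps S ≤ Nat.card (Quot (G.reachOn (insert e S)) ⊕ Unit) :=
        Nat.card_le_card_of_injective _ hinj
    _ = G.comps (insert e S) + 1 := by rw [Nat.card_sum]; simp [comps]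

theorem comps_insert_lt (S : Set G.E) (e : G.E) (hne : ¬ G.reachOn S (G.fst e) (G.snd e)) :
    G.comps (insert e S) < G.comps S := by
  classical
  letI : Fintype (Quot (G.reachOn S)) := Fintype.ofFinite _
  letI : Fintype (Quot (G.reachOn (insert e S))) := Fintype.ofFinite _
  rw [comps, comps, Nat.card_eq_fintype_card, Nat.card_eq_fintype_card]
  refine Fintype.card_lt_of_surjective_not_injective _ (compMap_surjective (Set.subset_insert e S)) ?_
  intro hinj
  have h1 : compMap S _ (Set.subset_insert e S) (Quot.mk _ (G.fst e)) =
      compMap S _ (Set.subset_insert e S) (Quot.mk _ (G.snd e)) := by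
    rw [compMap_mk, compMap_mk, quot_mk_eq_iff]
    exact Relation.ReflTransGen.single ⟨e, Set.mem_insert e S, Or.inl ⟨rfl, rfl⟩⟩
  exact hne (quot_mk_eq_iff.mp (hinj h1))

theorem comps_pos [Nonempty G.V] (S : Set G.E) : 0 < G.comps S := by
  rw [comps, Nat.card_pos_iff]
  exact ⟨⟨Quot.mk _ (Classical.arbitrary G.V)⟩, inferInstance⟩

theorem comps_univ_eq_one [Nonempty G.V] (hG : G.Connected) : G.comps Set.univ = 1 := by
  rw [comps, Nat.card_eq_one_iff_unique]
  constructor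
  · constructor
    intro a b
    obtain ⟨u, rfl⟩ := Quot.exists_rep a
    obtain ⟨v, rfl⟩ := Quot.exists_rep b
    exact Quot.sound (hG u v)
  · exact ⟨Quot.mk _ (Classical.arbitrary G.V)⟩

theorem reach_empty {u v : G.V} (h : G.reachOn (∅ : Set G.E) u v) : u = v := by
  induction h with
  | refl => rfl
  | tail _ hadj ih => obtain ⟨f, hf, _⟩ := hadj; exact absurd hf (Set.notMem_empty f)

theorem comps_empty : G.comps (∅ : Set G.E) = Fintype.card G.V := by
  rw [comps, ← Nat.card_eq_fintype_card]
  refine (Nat.card_eq_of_bijective (Quot.mk _) ⟨fun u v h => ?_, Quot.mk_surjective⟩).symm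
  exact reach_empty (quot_mk_eq_iff.mp h)

theorem card_le_card_add_comps (S : Finset G.E) :
    Fintype.card G.V ≤ S.card + G.comps (↑S : Set G.E) := by
  classical
  induction S using Finset.induction_on with
  | empty => simp [comps_empty]
  | @insert a S ha ih =>
    have h := comps_le_comps_insert_add_one (G := G) (↑S : Set G.E) a
    rw [Finset.card_insert_of_notMem ha]
    have hc : (↑(insert a S) : Set G.E) = insert a ↑S := by simp
    rw [hc]
    omega

end Comps


section DelContr

variable {G : Multigraph} {e : G.E}

theorem adjOn_delete_iff {S' : Set {f : G.E // f ≠ e}} {u v : G.V} :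
    (G.deleteEdge e).adjOn S' u v ↔ G.adjOn (Subtype.val '' S') u v := by
  constructor
  · rintro ⟨f, hf, h⟩
    exact ⟨f.1, ⟨f, hf, rfl⟩, h⟩
  · rintro ⟨f, ⟨f', hf', rfl⟩, h⟩
    exact ⟨f', hf', h⟩

theorem reachOn_delete_iff {S' : Set {f : G.E // f ≠ e}} {u v : G.V} :
    (G.deleteEdge e).reachOn S' u v ↔ G.reachOn (Subtype.val '' S') u v := by
  constructor
  · intro h
    induction h with
    | refl => exact Relation.ReflTransGen.refl
    | tail _ hadj ih => exact Relation.ReflTransGen.tail ih (adjOn_delete_iff.mp hadj)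
  · intro h
    induction h with
    | refl => exact Relation.ReflTransGen.refl
    | tail _ hadj ih => exact Relation.ReflTransGen.tail ih (adjOn_delete_iff.mpr hadj)

theorem comps_delete (S' : Set {f : G.E // f ≠ e}) :
    (G.deleteEdge e).comps S' = G.comps (Subtype.val '' S') := by
  have h : (G.deleteEdge e).reachOn S' = G.reachOn (Subtype.val '' S') :=
    funext fun u => funext fun v => propext reachOn_delete_iff
  unfold comps
  rw [h]
  rfl

theorem reach_contract_of {S' : Set {f : G.E // f ≠ e}} {u v : G.V}
    (h : G.reachOn (insert e (Subtype.val '' S')) u v) :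
    (G.contractEdge e).reachOn S' (Quot.mk _ u) (Quot.mk _ v) := by
  induction h with
  | refl => exact Relation.ReflTransGen.refl
  | @tail c d hreach hadj ih =>
    obtain ⟨f, hf, hor⟩ := hadj
    rcases Set.mem_insert_iff.mp hf with rfl | hfS
    · have hq : (Quot.mk (fun a b => a = G.fst f ∧ b = G.snd f) c =
          Quot.mk (fun a b => a = G.fst f ∧ b = G.snd f) d) := by
        have base : Quot.mk (fun a b => a = G.fst f ∧ b = G.snd f) (G.fst f) =
            Quot.mk (fun a b => a = G.fst f ∧ b = G.snd f) (G.snd f) := Quot.sound ⟨rfl, rfl⟩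
        rcases hor with ⟨h1, h2⟩ | ⟨h1, h2⟩
        · rw [← h1, ← h2]; exact base
        · rw [← h1, ← h2]; exact base.symm
      exact hq ▸ ih
    · obtain ⟨f', hf', rfl⟩ := hfS
      refine Relation.ReflTransGen.tail ih ⟨f', hf', ?_⟩
      rcases hor with ⟨h1, h2⟩ | ⟨h1, h2⟩
      · exact Or.inl ⟨congrArg _ h1, congrArg _ h2⟩
      · exact Or.inr ⟨congrArg _ h1, congrArg _ h2⟩

/-- Map from the contracted vertex set back to base components. -/
def toBase (e : G.E) (S' : Set {f : G.E // f ≠ e}) :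
    (G.contractEdge e).V → Quot (G.reachOn (insert e (Subtype.val '' S'))) :=
  Quot.lift (fun u => Quot.mk _ u) (by
    rintro a b ⟨rfl, rfl⟩
    exact Quot.sound (Relation.ReflTransGen.single
      ⟨e, Set.mem_insert e _, Or.inl ⟨rfl, rfl⟩⟩))

theorem toBase_mk (S' : Set {f : G.E // f ≠ e}) (u : G.V) :
    toBase e S' (Quot.mk _ u) = Quot.mk _ u := rfl

theorem toBase_const {S' : Set {f : G.E // f ≠ e}} {q1 q2 : (G.contractEdge e).V}
    (h : (G.contractEdge e).reachOn S' q1 q2) : toBase e S' q1 = toBase e S' q2 := by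
  induction h with
  | refl => rfl
  | @tail c d hreach hadj ih =>
    refine ih.trans ?_
    obtain ⟨f', hf', hor⟩ := hadj
    have hstep : toBase e S' (Quot.mk _ (G.fst f'.1)) = toBase e S' (Quot.mk _ (G.snd f'.1)) := by
      rw [toBase_mk, toBase_mk]
      exact Quot.sound (Relation.ReflTransGen.single
        ⟨f'.1, Set.mem_insert_iff.mpr (Or.inr ⟨f', hf', rfl⟩), Or.inl ⟨rfl, rfl⟩⟩)
    rcases hor with ⟨h1, h2⟩ | ⟨h1, h2⟩
    · rw [← h1, ← h2]; exact hstep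
    · rw [← h1, ← h2]; exact hstep.symm

/-- The components of `G` with `e` contracted, relative to `S'`, correspond to the
components of `G` relative to `S' ∪ {e}`. -/
def contractQuotEquiv (e : G.E) (S' : Set {f : G.E // f ≠ e}) :
    Quot (G.reachOn (insert e (Subtype.val '' S'))) ≃
      Quot ((G.contractEdge e).reachOn S') where
  toFun := Quot.lift (fun u => Quot.mk _ (Quot.mk _ u))
    (fun _ _ h => Quot.sound (reach_contract_of h))
  invFun := Quot.lift (toBase e S') (fun _ _ h => toBase_const h)
  left_inv := by
    intro q
    obtain ⟨u, rfl⟩ := Quot.exists_rep q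
    rfl
  right_inv := by
    intro q
    obtain ⟨q', rfl⟩ := Quot.exists_rep q
    obtain ⟨u, rfl⟩ := Quot.exists_rep q'
    rfl

theorem comps_contract (S' : Set {f : G.E // f ≠ e}) :
    (G.contractEdge e).comps S' = G.comps (insert e (Subtype.val '' S')) :=
  (Nat.card_congr (contractQuotEquiv e S')).symm

theorem insert_val_univ (e : G.E) :
    insert e ((Subtype.val : {f : G.E // f ≠ e} → G.E) '' Set.univ) = (Set.univ : Set G.E) := by
  ext f
  constructor
  · intro _
    exact Set.mem_univ f
  · intro _
    by_cases hf : f = e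
    · exact Set.mem_insert_iff.mpr (Or.inl hf)
    · exact Set.mem_insert_iff.mpr (Or.inr ⟨⟨f, hf⟩, Set.mem_univ _, rfl⟩)

theorem val_univ_eq (e : G.E) :
    (Subtype.val : {f : G.E // f ≠ e} → G.E) '' Set.univ = {f : G.E | f ≠ e} := by
  ext f
  constructor
  · rintro ⟨f', _, rfl⟩
    exact f'.2
  · intro hf
    exact ⟨⟨f, hf⟩, Set.mem_univ _, rfl⟩

theorem connected_contract (hG : G.Connected) : (G.contractEdge e).Connected := by
  intro q1 q2
  obtain ⟨u, rfl⟩ := Quot.exists_rep q1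
  obtain ⟨v, rfl⟩ := Quot.exists_rep q2
  have h := hG u v
  rw [← insert_val_univ e] at h
  exact reach_contract_of h

theorem reach_avoid (hG : G.Connected) (h : G.IsLoop e ∨ ¬ G.IsBridge e) (u v : G.V) :
    G.reachOn {f | f ≠ e} u v := by
  have huv := hG u v
  induction huv with
  | refl => exact Relation.ReflTransGen.refl
  | @tail c d hreach hadj ih =>
    obtain ⟨f, _, hor⟩ := hadj
    by_cases hfe : f = e
    · subst hfe
      rcases h with hloop | hbr
      · have hcd : c = d := by
          rcases hor with ⟨h1, h2⟩ | ⟨h1, h2⟩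
          · rw [← h1, ← h2, hloop]
          · rw [← h1, ← h2, hloop]
        exact hcd ▸ ih
      · have hb : G.reachOn {g | g ≠ f} (G.fst f) (G.snd f) := not_not.mp hbr
        rcases hor with ⟨h1, h2⟩ | ⟨h1, h2⟩
        · exact reachOn_trans ih (h1 ▸ h2 ▸ hb)
        · exact reachOn_trans ih (reachOn_symm (h2 ▸ h1 ▸ hb))
    · exact Relation.ReflTransGen.tail ih ⟨f, hfe, hor⟩

theorem connected_delete (hG : G.Connected) (h : G.IsLoop e ∨ ¬ G.IsBridge e) :
    (G.deleteEdge e).Connected := by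
  intro u v
  have hr : (G.deleteEdge e).reachOn (Set.univ : Set {f : G.E // f ≠ e}) u v := by
    refine reachOn_delete_iff.mpr ?_
    rw [val_univ_eq]
    exact reach_avoid hG h u v
  exact reachOn_mono (Set.subset_univ _) hr

end DelContr

/-! ### The subgraph-expansion sum -/

/-- The signed sum `∑_S (-1)^{c(S)} 2^{|S|}`. -/
def phiZ (G : Multigraph) : ℤ :=
  ∑ S : Finset G.E, (-1) ^ (G.comps (↑S : Set G.E)) * 2 ^ S.card

section Phi

variable {G : Multigraph} {e : G.E}

/-- Push a finset of edges avoiding `e` back into `G.E`. -/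
def up (e : G.E) (T : Finset {f : G.E // f ≠ e}) : Finset G.E :=
  T.map (Function.Embedding.subtype _)

theorem mem_up {T : Finset {f : G.E // f ≠ e}} {f : G.E} :
    f ∈ up e T ↔ ∃ f' ∈ T, (f' : G.E) = f := by
  simp [up, Finset.mem_map]

theorem not_mem_up (T : Finset {f : G.E // f ≠ e}) : e ∉ up e T := by
  intro h
  obtain ⟨f', _, hf'⟩ := mem_up.mp h
  exact f'.2 hf'

theorem up_down (S : Finset G.E) (hS : e ∉ S) : up e (S.subtype (· ≠ e)) = S := by
  ext f
  rw [mem_up]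
  constructor
  · rintro ⟨f', hf', rfl⟩
    exact (Finset.mem_subtype.mp hf')
  · intro hf
    have hfe : f ≠ e := fun h => hS (h ▸ hf)
    exact ⟨⟨f, hfe⟩, Finset.mem_subtype.mpr hf, rfl⟩

theorem insert_up_down (S : Finset G.E) (hS : e ∈ S) :
    insert e (up e (S.subtype (· ≠ e))) = S := by
  ext f
  rw [Finset.mem_insert, mem_up]
  constructor
  · rintro (rfl | ⟨f', hf', rfl⟩)
    · exact hS
    · exact Finset.mem_subtype.mp hf'
  · intro hf
    by_cases hfe : f = e
    · exact Or.inl hfe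
    · exact Or.inr ⟨⟨f, hfe⟩, Finset.mem_subtype.mpr hf, rfl⟩

theorem down_up (T : Finset {f : G.E // f ≠ e}) : (up e T).subtype (· ≠ e) = T := by
  ext f'
  rw [Finset.mem_subtype, mem_up]
  constructor
  · rintro ⟨f'', hf'', h⟩
    rwa [← Subtype.ext h]
  · intro h
    exact ⟨f', h, rfl⟩

theorem down_insert_up (T : Finset {f : G.E // f ≠ e}) :
    (insert e (up e T)).subtype (· ≠ e) = T := by
  ext f'
  rw [Finset.mem_subtype, Finset.mem_insert, mem_up]
  constructor
  · rintro (h | ⟨f'', hf'', h⟩)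
    · exact absurd h f'.2
    · rwa [← Subtype.ext h]
  · intro h
    exact Or.inr ⟨f', h, rfl⟩

theorem sum_split (e : G.E) (g : Finset G.E → ℤ) :
    ∑ S : Finset G.E, g S =
      ∑ T : Finset {f : G.E // f ≠ e}, (g (up e T) + g (insert e (up e T))) := by
  classical
  rw [← Finset.sum_filter_add_sum_filter_not Finset.univ (fun S => e ∉ S), Finset.sum_add_distrib]
  congr 1
  · refine Finset.sum_bij' (fun S _ => S.subtype (· ≠ e)) (fun T _ => up e T) ?_ ?_ ?_ ?_ ?_
    · intro S hS
      exact Finset.mem_univ _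
    · intro T _
      simp only [Finset.mem_filter, Finset.mem_univ, true_and]
      exact not_mem_up T
    · intro S hS
      rw [Finset.mem_filter] at hS
      exact up_down S hS.2
    · intro T _
      exact down_up T
    · intro S hS
      rw [Finset.mem_filter] at hS
      rw [up_down S hS.2]
  · refine Finset.sum_bij' (fun S _ => S.subtype (· ≠ e)) (fun T _ => insert e (up e T))
      ?_ ?_ ?_ ?_ ?_
    · intro S hS
      exact Finset.mem_univ _
    · intro T _
      simp only [Finset.mem_filter, Finset.mem_univ, true_and, not_not]
      exact Finset.mem_insert_self e _
    · intro S hS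
      rw [Finset.mem_filter, not_not] at hS
      exact insert_up_down S hS.2
    · intro T _
      exact down_insert_up T
    · intro S hS
      rw [Finset.mem_filter, not_not] at hS
      rw [insert_up_down S hS.2]

theorem up_coe (T : Finset {f : G.E // f ≠ e}) :
    (↑(up e T) : Set G.E) = Subtype.val '' (↑T : Set {f : G.E // f ≠ e}) := by
  ext f
  rw [Finset.mem_coe, mem_up]
  constructor
  · rintro ⟨f', hf', rfl⟩
    exact ⟨f', hf', rfl⟩
  · rintro ⟨f', hf', rfl⟩
    exact ⟨f', hf', rfl⟩

theorem up_card (T : Finset {f : G.E // f ≠ e}) : (up e T).card = T.card :=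
  Finset.card_map _

theorem phiZ_delete_eq (e : G.E) :
    phiZ (G.deleteEdge e) =
      ∑ T : Finset {f : G.E // f ≠ e},
        (-1 : ℤ) ^ (G.comps (Subtype.val '' (↑T : Set {f : G.E // f ≠ e}))) * 2 ^ T.card := by
  show (∑ T : Finset {f : G.E // f ≠ e},
      (-1 : ℤ) ^ ((G.deleteEdge e).comps (↑T : Set {f : G.E // f ≠ e})) * 2 ^ T.card) = _
  exact Finset.sum_congr rfl fun T _ => by rw [comps_delete (↑T : Set {f : G.E // f ≠ e})]

theorem phiZ_contract_eq (e : G.E) :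
    phiZ (G.contractEdge e) =
      ∑ T : Finset {f : G.E // f ≠ e},
        (-1 : ℤ) ^ (G.comps (insert e (Subtype.val '' (↑T : Set {f : G.E // f ≠ e})))) *
          2 ^ T.card := by
  show (∑ T : Finset {f : G.E // f ≠ e},
      (-1 : ℤ) ^ ((G.contractEdge e).comps (↑T : Set {f : G.E // f ≠ e})) * 2 ^ T.card) = _
  exact Finset.sum_congr rfl fun T _ => by rw [comps_contract (↑T : Set {f : G.E // f ≠ e})]

theorem phiZ_rec (e : G.E) :
    phiZ G = phiZ (G.deleteEdge e) + 2 * phiZ (G.contractEdge e) := by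
  rw [phiZ, sum_split e, Finset.sum_add_distrib, phiZ_delete_eq e, phiZ_contract_eq e,
    Finset.mul_sum]
  congr 1
  · exact Finset.sum_congr rfl fun T _ => by rw [up_coe, up_card]
  · exact Finset.sum_congr rfl fun T _ => by
      rw [Finset.card_insert_of_notMem (not_mem_up T), Finset.coe_insert, up_coe, up_card,
        pow_succ]
      ring

theorem comps_insert_loop (hloop : G.IsLoop e) (S : Set G.E) :
    G.comps (insert e S) = G.comps S := by
  refine comps_congr fun u v => ⟨fun h => ?_, fun h => reachOn_mono (Set.subset_insert e S) h⟩
  induction h with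
  | refl => exact Relation.ReflTransGen.refl
  | @tail c d hreach hadj ih =>
    obtain ⟨f, hf, hor⟩ := hadj
    rcases Set.mem_insert_iff.mp hf with rfl | hfS
    · have hcd : c = d := by
        rcases hor with ⟨h1, h2⟩ | ⟨h1, h2⟩
        · rw [← h1, ← h2, hloop]
        · rw [← h1, ← h2, hloop]
      exact hcd ▸ ih
    · exact Relation.ReflTransGen.tail ih ⟨f, hfS, hor⟩

theorem phiZ_loop (hloop : G.IsLoop e) :
    phiZ (G.contractEdge e) = phiZ (G.deleteEdge e) := by
  rw [phiZ_contract_eq e, phiZ_delete_eq e]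
  refine Finset.sum_congr rfl fun T _ => ?_
  rw [comps_insert_loop hloop]

theorem comps_insert_bridge (hbr : G.IsBridge e) (S : Set G.E) (hS : S ⊆ {f | f ≠ e}) :
    G.comps S = G.comps (insert e S) + 1 := by
  have h1 := comps_le_comps_insert_add_one (G := G) S e
  have h2 : G.comps (insert e S) < G.comps S :=
    comps_insert_lt S e fun h => hbr (reachOn_mono hS h)
  omega

theorem phiZ_bridge (hbr : G.IsBridge e) :
    phiZ (G.deleteEdge e) = - phiZ (G.contractEdge e) := by
  rw [phiZ_contract_eq e, phiZ_delete_eq e, ← Finset.sum_neg_distrib]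
  refine Finset.sum_congr rfl fun T _ => ?_
  have hsub : Subtype.val '' (↑T : Set {f : G.E // f ≠ e}) ⊆ {f | f ≠ e} := by
    rintro f ⟨f', _, rfl⟩
    exact f'.2
  rw [comps_insert_bridge hbr _ hsub, pow_succ]
  ring

end Phi


section Strong

variable {G : Multigraph} {e : G.E}

/-- Restrict a partial orientation to the edges different from `e`. -/
def restrictPO (e : G.E) (O : G.PartialOrientation) : {f : G.E // f ≠ e} → Option Bool :=
  fun f => O f.1

/-- Extend a partial orientation of the edges different from `e` by assigning `x` to `e`. -/
def extPO (e : G.E) (O' : {f : G.E // f ≠ e} → Option Bool) (x : Option Bool) :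
    G.PartialOrientation :=
  fun f => if h : f = e then x else O' ⟨f, h⟩

theorem extPO_e (O' : {f : G.E // f ≠ e} → Option Bool) (x : Option Bool) :
    extPO e O' x e = x := dif_pos rfl

theorem extPO_ne (O' : {f : G.E // f ≠ e} → Option Bool) (x : Option Bool) {f : G.E}
    (h : f ≠ e) : extPO e O' x f = O' ⟨f, h⟩ := dif_neg h

theorem restrict_ext (O' : {f : G.E // f ≠ e} → Option Bool) (x : Option Bool) :
    restrictPO e (extPO e O' x) = O' := by
  funext f
  rw [restrictPO, extPO_ne O' x f.2]

theorem ext_restrict {O : G.PartialOrientation} {x : Option Bool} (h : O e = x) :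
    extPO e (restrictPO e O) x = O := by
  funext f
  by_cases hf : f = e
  · subst hf
    rw [extPO_e, h]
  · rw [extPO_ne _ _ hf]
    rfl

theorem not_crosses_pull {X' : Set (G.contractEdge e).V} :
    ¬ G.crosses (Quot.mk _ ⁻¹' X') e := by
  intro hcr
  have hq : (Quot.mk _ (G.fst e) : (G.contractEdge e).V) = Quot.mk _ (G.snd e) :=
    Quot.sound ⟨rfl, rfl⟩
  refine hcr ?_
  constructor
  · intro h
    show Quot.mk _ (G.snd e) ∈ X'
    rw [← hq]
    exact h
  · intro h
    show Quot.mk _ (G.fst e) ∈ X'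
    rw [hq]
    exact h

/-- Pull back a directed cut of the contraction. -/
theorem pull_cut {O' : {f : G.E // f ≠ e} → Option Bool} {X' : Set (G.contractEdge e).V}
    (h : (G.contractEdge e).IsDirCut O' X') :
    ∃ X : Set G.V, ¬ G.crosses X e ∧ (∀ x, G.IsDirCut (extPO e O' x) X) ∧
      (G.deleteEdge e).IsDirCut O' X := by
  refine ⟨Quot.mk _ ⁻¹' X', not_crosses_pull, ?_, ?_⟩
  · intro x
    obtain ⟨⟨f', hf'⟩, hcond⟩ := h
    refine ⟨⟨f'.1, hf'⟩, ?_⟩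
    intro f hcr
    have hfe : f ≠ e := by
      intro hfeq
      exact not_crosses_pull (hfeq ▸ hcr)
    have := hcond ⟨f, hfe⟩ hcr
    rw [extPO_ne _ _ hfe]
    exact this
  · obtain ⟨⟨f', hf'⟩, hcond⟩ := h
    exact ⟨⟨f', hf'⟩, fun f hcr => hcond f hcr⟩

/-- Push forward a directed cut avoiding `e` to the contraction. -/
theorem push_cut {O' : {f : G.E // f ≠ e} → Option Bool} {X : Set G.V}
    (hnc : ¬ G.crosses X e) (h : (G.deleteEdge e).IsDirCut O' X) :
    ∃ X', (G.contractEdge e).IsDirCut O' X' := by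
  have hiff : (G.fst e ∈ X) = (G.snd e ∈ X) := propext (not_not.mp hnc)
  refine ⟨fun q => Quot.lift (· ∈ X) (by rintro a b ⟨rfl, rfl⟩; exact hiff) q, ?_⟩
  obtain ⟨f', hf'⟩ := h.1
  exact ⟨⟨f', hf'⟩, fun f hcr => h.2 f hcr⟩

/-- A directed cut not crossed by `e` restricts to the deletion. -/
theorem cut_to_delete {O : G.PartialOrientation} {X : Set G.V}
    (h : G.IsDirCut O X) (hnc : ¬ G.crosses X e) :
    (G.deleteEdge e).IsDirCut (restrictPO e O) X := by
  obtain ⟨⟨f, hf⟩, hcond⟩ := h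
  have hfe : f ≠ e := fun hfeq => hnc (hfeq ▸ hf)
  exact ⟨⟨⟨f, hfe⟩, hf⟩, fun f' hcr => hcond f'.1 hcr⟩

/-- A directed cut of the deletion extends to `G` if `e` does not cross it. -/
theorem cut_of_delete {O' : {f : G.E // f ≠ e} → Option Bool} {X : Set G.V} {x : Option Bool}
    (h : (G.deleteEdge e).IsDirCut O' X) (hnc : ¬ G.crosses X e) :
    G.IsDirCut (extPO e O' x) X := by
  obtain ⟨⟨f', hf'⟩, hcond⟩ := h
  refine ⟨⟨f'.1, hf'⟩, ?_⟩
  intro f hcr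
  have hfe : f ≠ e := fun hfeq => hnc (hfeq ▸ hcr)
  rw [extPO_ne _ _ hfe]
  exact hcond ⟨f, hfe⟩ hcr

/-- `e` is oriented out of any directed cut it crosses. -/
theorem cut_crossed_cases {O : G.PartialOrientation} {X : Set G.V}
    (h : G.IsDirCut O X) (hcr : G.crosses X e) :
    (O e = some true ∧ G.fst e ∈ X ∧ G.snd e ∉ X) ∨
      (O e = some false ∧ G.snd e ∈ X ∧ G.fst e ∉ X) := by
  have hcond := h.2 e hcr
  by_cases h1 : G.fst e ∈ X <;> by_cases h2 : G.snd e ∈ X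
  · exact absurd (iff_of_true h1 h2) hcr
  · exact Or.inl ⟨hcond.1 h1, h1, h2⟩
  · exact Or.inr ⟨hcond.2 h2, h2, h1⟩
  · exact absurd (iff_of_false h1 h2) hcr

/-- Extending by `none`: strong connectivity matches the contraction. -/
theorem strong_ext_none (O' : {f : G.E // f ≠ e} → Option Bool) :
    G.StronglyConnected (extPO e O' none) ↔ (G.contractEdge e).StronglyConnected O' := by
  unfold StronglyConnected
  rw [not_iff_not]
  constructor
  · rintro ⟨X, hX⟩
    have hnc : ¬ G.crosses X e := by
      intro hcr
      rcases cut_crossed_cases hX hcr with ⟨h1, _, _⟩ | ⟨h1, _, _⟩ <;>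
        · rw [extPO_e] at h1; cases h1
    have hdel := cut_to_delete hX hnc
    rw [restrict_ext] at hdel
    exact push_cut hnc hdel
  · rintro ⟨X', hX'⟩
    obtain ⟨X, _, hcut, _⟩ := pull_cut hX'
    exact ⟨X, hcut none⟩

/-- `O'` has a bad cut for orientation `b` of `e`. -/
def BadCut (e : G.E) (O' : {f : G.E // f ≠ e} → Option Bool) (b : Bool) : Prop :=
  ∃ X, G.IsDirCut (extPO e O' (some b)) X ∧ G.crosses X e

theorem strong_ext_some (O' : {f : G.E // f ≠ e} → Option Bool) (b : Bool) :
    G.StronglyConnected (extPO e O' (some b)) ↔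
      ((G.contractEdge e).StronglyConnected O' ∧ ¬ BadCut e O' b) := by
  unfold StronglyConnected
  constructor
  · intro h
    constructor
    · rintro ⟨X', hX'⟩
      obtain ⟨X, _, hcut, _⟩ := pull_cut hX'
      exact h ⟨X, hcut (some b)⟩
    · rintro ⟨X, hX, _⟩
      exact h ⟨X, hX⟩
  · rintro ⟨hstr, hbad⟩ ⟨X, hX⟩
    by_cases hnc : G.crosses X e
    · exact hbad ⟨X, hX, hnc⟩
    · have hdel := cut_to_delete hX hnc
      rw [restrict_ext] at hdel
      exact hstr (push_cut hnc hdel)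

/-- Strong connectivity of the deletion implies strong connectivity of the contraction. -/
theorem strong_delete_to_contract {O' : {f : G.E // f ≠ e} → Option Bool}
    (h : (G.deleteEdge e).StronglyConnected O') :
    (G.contractEdge e).StronglyConnected O' := by
  rintro ⟨X', hX'⟩
  obtain ⟨X, _, _, hdel⟩ := pull_cut hX'
  exact h ⟨X, hdel⟩

/-- A bad cut yields a directed cut of the deletion (when `e` is not a bridge). -/
theorem badCut_not_strong_delete (hbr : ¬ G.IsBridge e)
    {O' : {f : G.E // f ≠ e} → Option Bool} {b : Bool} (hb : BadCut e O' b) :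
    ¬ (G.deleteEdge e).StronglyConnected O' := by
  obtain ⟨X, hX, hcr⟩ := hb
  intro hstr
  refine hstr ⟨X, ?_, ?_⟩
  · -- need a crossing edge different from e
    have hreach : G.reachOn {f | f ≠ e} (G.fst e) (G.snd e) := not_not.mp hbr
    rcases cut_crossed_cases hX hcr with ⟨_, h1, h2⟩ | ⟨_, h1, h2⟩
    · obtain ⟨f, hf, hfcr⟩ := exists_crossing hreach h1 h2
      exact ⟨⟨f, hf⟩, hfcr⟩
    · obtain ⟨f, hf, hfcr⟩ := exists_crossing (reachOn_symm hreach) h1 h2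
      exact ⟨⟨f, hf⟩, hfcr⟩
  · intro f' hcr'
    have h := hX.2 f'.1 hcr'
    rwa [extPO_ne O' (some b) f'.2] at h

/-- If the contraction is strong but the deletion is not, some orientation of `e` is bad. -/
theorem badCut_of_not_strong_delete {O' : {f : G.E // f ≠ e} → Option Bool}
    (hcon : (G.contractEdge e).StronglyConnected O')
    (hdel : ¬ (G.deleteEdge e).StronglyConnected O') :
    BadCut e O' true ∨ BadCut e O' false := by
  unfold StronglyConnected at hdel
  rw [not_not] at hdel
  obtain ⟨X, hX⟩ := hdel
  by_cases hnc : G.crosses X e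
  · by_cases h1 : G.fst e ∈ X
    · have h2 : G.snd e ∉ X := fun h => hnc (iff_of_true h1 h)
      refine Or.inl ⟨X, ⟨⟨e, hnc⟩, ?_⟩, hnc⟩
      intro f hcr
      by_cases hfe : f = e
      · subst hfe
        rw [extPO_e]
        exact ⟨fun _ => rfl, fun h => absurd h h2⟩
      · rw [extPO_ne _ _ hfe]
        exact hX.2 ⟨f, hfe⟩ hcr
    · have h2 : G.snd e ∈ X := by
        by_contra h2
        exact hnc (iff_of_false h1 h2)
      refine Or.inr ⟨X, ⟨⟨e, hnc⟩, ?_⟩, hnc⟩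
      intro f hcr
      by_cases hfe : f = e
      · subst hfe
        rw [extPO_e]
        exact ⟨fun h => absurd h h1, fun _ => rfl⟩
      · rw [extPO_ne _ _ hfe]
        exact hX.2 ⟨f, hfe⟩ hcr
  · exact absurd (push_cut hnc hX) hcon

end Strong


section Strong2

variable {G : Multigraph} {e : G.E}

theorem crosses_compl {X : Set G.V} {f : G.E} : G.crosses Xᶜ f ↔ G.crosses X f := by
  rw [crosses, crosses]
  constructor
  · intro h hiff
    exact h (by rw [Set.mem_compl_iff, Set.mem_compl_iff, hiff])
  · intro h hiff
    refine h ?_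
    rw [Set.mem_compl_iff, Set.mem_compl_iff] at hiff
    tauto

/-- At most one orientation of `e` can be bad (given strong contraction). -/
theorem badCut_disjoint (hG : G.Connected) (hbr : ¬ G.IsBridge e)
    {O' : {f : G.E // f ≠ e} → Option Bool}
    (hcon : (G.contractEdge e).StronglyConnected O') :
    ¬ (BadCut e O' true ∧ BadCut e O' false) := by
  rintro ⟨⟨X, hX, hcrX⟩, ⟨Y, hY, hcrY⟩⟩
  have hXf : G.fst e ∈ X ∧ G.snd e ∉ X := by
    rcases cut_crossed_cases hX hcrX with ⟨_, h1, h2⟩ | ⟨h0, _, _⟩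
    · exact ⟨h1, h2⟩
    · rw [extPO_e] at h0
      exact absurd (Option.some.inj h0) (by simp)
  have hYf : G.snd e ∈ Y ∧ G.fst e ∉ Y := by
    rcases cut_crossed_cases hY hcrY with ⟨h0, _, _⟩ | ⟨_, h1, h2⟩
    · rw [extPO_e] at h0
      exact absurd (Option.some.inj h0) (by simp)
    · exact ⟨h1, h2⟩
  -- no edge crosses X ∩ Y
  have hZ : ∀ f, ¬ G.crosses (X ∩ Y) f := by
    intro f hcr
    have hncZ : ¬ G.crosses (X ∩ Y) e := fun hc =>
      hc (iff_of_false (fun h => hYf.2 h.2) (fun h => hXf.2 h.1))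
    have hfe : f ≠ e := fun hfeq => hncZ (hfeq ▸ hcr)
    have hcut : (G.deleteEdge e).IsDirCut O' (X ∩ Y) := by
      refine ⟨⟨⟨f, hfe⟩, hcr⟩, ?_⟩
      rintro ⟨f', hf'e⟩ hcr'
      constructor
      · rintro ⟨hfX, hfY⟩
        by_cases hsX : G.snd f' ∈ X
        · have hsY : G.snd f' ∉ Y := fun hsY => hcr' (iff_of_true ⟨hfX, hfY⟩ ⟨hsX, hsY⟩)
          have := (hY.2 f' (fun hiff => hsY (hiff.mp hfY))).1 hfY
          rwa [extPO_ne _ _ hf'e] at this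
        · have := (hX.2 f' (fun hiff => hsX (hiff.mp hfX))).1 hfX
          rwa [extPO_ne _ _ hf'e] at this
      · rintro ⟨hfX, hfY⟩
        by_cases hsX : G.fst f' ∈ X
        · have hsY : G.fst f' ∉ Y := fun hsY => hcr' (iff_of_true ⟨hsX, hsY⟩ ⟨hfX, hfY⟩)
          have := (hY.2 f' (fun hiff => hsY (hiff.mpr hfY))).2 hfY
          rwa [extPO_ne _ _ hf'e] at this
        · have := (hX.2 f' (fun hiff => hsX (hiff.mpr hfX))).2 hfX
          rwa [extPO_ne _ _ hf'e] at this
    exact hcon (push_cut hncZ hcut)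
  -- no edge crosses X ∪ Y
  have hW : ∀ f, ¬ G.crosses (X ∪ Y) f := by
    intro f hcr
    have hncW : ¬ G.crosses (X ∪ Y) e := fun hc =>
      hc (iff_of_true (Or.inl hXf.1) (Or.inr hYf.1))
    have hfe : f ≠ e := fun hfeq => hncW (hfeq ▸ hcr)
    have hcut : (G.deleteEdge e).IsDirCut O' (X ∪ Y) := by
      refine ⟨⟨⟨f, hfe⟩, hcr⟩, ?_⟩
      rintro ⟨f', hf'e⟩ hcr'
      constructor
      · intro hfW
        have hsW : G.snd f' ∉ X ∪ Y := fun h => hcr' (iff_of_true hfW h)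
        rcases hfW with hfX | hfY
        · have := (hX.2 f' (fun hiff => hsW (Or.inl (hiff.mp hfX)))).1 hfX
          rwa [extPO_ne _ _ hf'e] at this
        · have := (hY.2 f' (fun hiff => hsW (Or.inr (hiff.mp hfY)))).1 hfY
          rwa [extPO_ne _ _ hf'e] at this
      · intro hsW
        have hfW : G.fst f' ∉ X ∪ Y := fun h => hcr' (iff_of_true h hsW)
        rcases hsW with hsX | hsY
        · have := (hX.2 f' (fun hiff => hfW (Or.inl (hiff.mpr hsX)))).2 hsX
          rwa [extPO_ne _ _ hf'e] at this
        · have := (hY.2 f' (fun hiff => hfW (Or.inr (hiff.mpr hsY)))).2 hsY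
          rwa [extPO_ne _ _ hf'e] at this
    exact hcon (push_cut hncW hcut)
  -- hence Y is the complement of X
  have hcompl : ∀ v, v ∈ Y ↔ v ∉ X := by
    intro v
    constructor
    · intro hvY hvX
      have hmem : v ∈ X ∩ Y := ⟨hvX, hvY⟩
      have hnmem : G.fst e ∉ X ∩ Y := fun h => hYf.2 h.2
      obtain ⟨f, _, hcr⟩ := exists_crossing (X := X ∩ Y) (hG v (G.fst e)) hmem hnmem
      exact hZ f hcr
    · intro hvX
      by_contra hvY
      have hmem : G.snd e ∈ X ∪ Y := Or.inr hYf.1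
      have hnmem : v ∉ X ∪ Y := fun h => h.elim hvX hvY
      obtain ⟨f, _, hcr⟩ := exists_crossing (X := X ∪ Y) (hG (G.snd e) v) hmem hnmem
      exact hW f hcr
  -- e is not a bridge, so there is another crossing edge; contradiction
  obtain ⟨f, hf, hcr⟩ := exists_crossing (not_not.mp hbr) hXf.1 hXf.2
  have hfe : f ≠ e := hf
  have hcrY' : G.crosses Y f := by
    intro hiff
    refine hcr ?_
    rw [hcompl, hcompl] at hiff
    tauto
  by_cases hfX : G.fst f ∈ X
  · have hsX : G.snd f ∉ X := fun h => hcr (iff_of_true hfX h)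
    have h1 := (hX.2 f hcr).1 hfX
    rw [extPO_ne _ _ hfe] at h1
    have h2 := (hY.2 f hcrY').2 ((hcompl _).mpr hsX)
    rw [extPO_ne _ _ hfe] at h2
    rw [h1] at h2
    exact absurd (Option.some.inj h2) (by simp)
  · have hsX : G.snd f ∈ X := by
      by_contra hsX
      exact hcr (iff_of_false hfX hsX)
    have h1 := (hX.2 f hcr).2 hsX
    rw [extPO_ne _ _ hfe] at h1
    have h2 := (hY.2 f hcrY').1 ((hcompl _).mpr hfX)
    rw [extPO_ne _ _ hfe] at h2
    rw [h1] at h2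
    exact absurd (Option.some.inj h2) (by simp)

/-- For a loop, strong connectivity ignores the loop edge. -/
theorem strong_loop (hloop : G.IsLoop e) (O' : {f : G.E // f ≠ e} → Option Bool)
    (x : Option Bool) :
    G.StronglyConnected (extPO e O' x) ↔ (G.deleteEdge e).StronglyConnected O' := by
  have hecr : ∀ X : Set G.V, ¬ G.crosses X e := by
    intro X hc
    exact hc (by rw [hloop])
  unfold StronglyConnected
  rw [not_iff_not]
  constructor
  · rintro ⟨X, hX⟩
    have hdel := cut_to_delete hX (hecr X)
    rw [restrict_ext] at hdel
    exact ⟨X, hdel⟩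
  · rintro ⟨X, hX⟩
    exact ⟨X, cut_of_delete hX (hecr X)⟩

/-- For a bridge, any strong partial orientation leaves `e` unoriented. -/
theorem strong_e_none (hbr : G.IsBridge e) {O : G.PartialOrientation}
    (h : G.StronglyConnected O) : O e = none := by
  set X : Set G.V := {v | G.reachOn {f | f ≠ e} (G.fst e) v} with hXdef
  have hfst : G.fst e ∈ X := Relation.ReflTransGen.refl
  have hsnd : G.snd e ∉ X := hbr
  have honly : ∀ f, f ≠ e → ¬ G.crosses X f := by
    intro f hfe hcr
    refine hcr ?_
    constructor
    · intro h1
      exact Relation.ReflTransGen.tail h1 ⟨f, hfe, Or.inl ⟨rfl, rfl⟩⟩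
    · intro h2
      exact Relation.ReflTransGen.tail h2 ⟨f, hfe, Or.inr ⟨rfl, rfl⟩⟩
  have hcre : G.crosses X e := fun hiff => hsnd (hiff.mp hfst)
  rcases hOe : O e with _ | b
  · rfl
  rcases b with _ | _
  · -- b = false : Xᶜ is a directed cut
    exfalso
    refine h ⟨Xᶜ, ⟨e, crosses_compl.mpr hcre⟩, ?_⟩
    intro f hcr
    have hfe : f = e := by
      by_contra hfe
      exact honly f hfe (crosses_compl.mp hcr)
    subst hfe
    exact ⟨fun h1 => absurd hfst h1, fun _ => hOe⟩
  · -- b = true : X is a directed cut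
    exfalso
    refine h ⟨X, ⟨e, hcre⟩, ?_⟩
    intro f hcr
    have hfe : f = e := by
      by_contra hfe
      exact honly f hfe hcr
    subst hfe
    exact ⟨fun _ => hOe, fun h2 => absurd h2 hsnd⟩

end Strong2

section Counting

/-- Split the count of a subtype along a predicate. -/
theorem card_and_split {α : Type*} [Finite α] (p q : α → Prop) :
    Nat.card {x // p x} = Nat.card {x // p x ∧ q x} + Nat.card {x // p x ∧ ¬ q x} := by
  classical
  rw [← Nat.card_congr (Equiv.sumCompl (fun x : {y // p y} => q x.1)), Nat.card_sum,
    Nat.card_congr (Equiv.subtypeSubtypeEquivSubtypeInter p q),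
    Nat.card_congr (Equiv.subtypeSubtypeEquivSubtypeInter p (fun x => ¬ q x))]

/-- Split a disjunction with disjointness. -/
theorem card_or_split {α : Type*} [Finite α] (p q r : α → Prop)
    (h : ∀ x, p x → q x → r x → False) :
    Nat.card {x // p x ∧ (q x ∨ r x)} = Nat.card {x // p x ∧ q x} + Nat.card {x // p x ∧ r x} := by
  classical
  rw [← Nat.card_sum]
  refine Nat.card_congr (Equiv.symm ⟨fun s => Sum.elim (fun a => ⟨a.1, a.2.1, Or.inl a.2.2⟩)
    (fun a => ⟨a.1, a.2.1, Or.inr a.2.2⟩) s,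
    fun s => if hq : q s.1 then Sum.inl ⟨s.1, s.2.1, hq⟩ else
      Sum.inr ⟨s.1, s.2.1, (s.2.2).resolve_left hq⟩, ?_, ?_⟩)
  · rintro (⟨x, hp, hq⟩ | ⟨x, hp, hr⟩)
    · simp only [Sum.elim_inl]
      exact dif_pos hq
    · simp only [Sum.elim_inr]
      exact dif_neg (fun hq => h x hp hq hr)
  · rintro ⟨x, hp, hqr⟩
    by_cases hq : q x
    · simp only [dif_pos hq, Sum.elim_inl]
    · simp only [dif_neg hq, Sum.elim_inr]

/-- Split the count along the value of a distinguished coordinate. -/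
theorem card_split3 {α : Type*} [Finite α] (p : α → Prop) (v : α → Option Bool) :
    Nat.card {x // p x} = Nat.card {x // p x ∧ v x = none} +
      Nat.card {x // p x ∧ v x = some true} + Nat.card {x // p x ∧ v x = some false} := by
  rw [card_and_split p (fun x => v x = none)]
  rw [card_and_split (fun x => p x ∧ ¬ v x = none) (fun x => v x = some true)]
  have e1 : ∀ x, ((p x ∧ ¬ v x = none) ∧ v x = some true) ↔ (p x ∧ v x = some true) := by
    intro x
    rcases hv : v x with _ | _ <;> simp [hv]
  have e2 : ∀ x, ((p x ∧ ¬ v x = none) ∧ ¬ v x = some true) ↔ (p x ∧ v x = some false) := by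
    intro x
    rcases hv : v x with _ | b
    · simp [hv]
    · rcases b <;> simp [hv]
  rw [Nat.card_congr (Equiv.subtypeEquivRight e1), Nat.card_congr (Equiv.subtypeEquivRight e2)]
  omega

end Counting


section Count2

variable {G : Multigraph} {e : G.E}

theorem card_none_eq (e : G.E) :
    Nat.card {O : G.PartialOrientation // G.StronglyConnected O ∧ O e = none} =
      Nat.card {O' : {f : G.E // f ≠ e} → Option Bool //
        (G.contractEdge e).StronglyConnected O'} := by
  refine Nat.card_congr ⟨fun s => ⟨restrictPO e s.1,
      (strong_ext_none _).mp (by rw [ext_restrict s.2.2]; exact s.2.1)⟩,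
    fun s => ⟨extPO e s.1 none, (strong_ext_none s.1).mpr s.2, extPO_e _ _⟩,
    fun s => Subtype.ext (ext_restrict s.2.2),
    fun s => Subtype.ext (restrict_ext s.1 none)⟩

theorem card_some_eq (e : G.E) (b : Bool) :
    Nat.card {O : G.PartialOrientation // G.StronglyConnected O ∧ O e = some b} =
      Nat.card {O' : {f : G.E // f ≠ e} → Option Bool //
        (G.contractEdge e).StronglyConnected O' ∧ ¬ BadCut e O' b} := by
  refine Nat.card_congr ⟨fun s => ⟨restrictPO e s.1,
      (strong_ext_some _ b).mp (by rw [ext_restrict s.2.2]; exact s.2.1)⟩,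
    fun s => ⟨extPO e s.1 (some b), (strong_ext_some s.1 b).mpr s.2, extPO_e _ _⟩,
    fun s => Subtype.ext (ext_restrict s.2.2),
    fun s => Subtype.ext (restrict_ext s.1 (some b))⟩

theorem numStrong_contract_eq (e : G.E) :
    (G.contractEdge e).numStrong =
      Nat.card {O' : {f : G.E // f ≠ e} → Option Bool //
        (G.contractEdge e).StronglyConnected O'} := rfl

theorem numStrong_delete_eq (e : G.E) :
    (G.deleteEdge e).numStrong =
      Nat.card {O' : {f : G.E // f ≠ e} → Option Bool //
        (G.deleteEdge e).StronglyConnected O'} := rfl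

theorem count_ordinary (hG : G.Connected) (hbr : ¬ G.IsBridge e) :
    G.numStrong = (G.deleteEdge e).numStrong + 2 * (G.contractEdge e).numStrong := by
  classical
  have h0 : Nat.card {O : G.PartialOrientation // G.StronglyConnected O} =
      Nat.card {O : G.PartialOrientation // G.StronglyConnected O ∧ O e = none} +
      Nat.card {O : G.PartialOrientation // G.StronglyConnected O ∧ O e = some true} +
      Nat.card {O : G.PartialOrientation // G.StronglyConnected O ∧ O e = some false} :=
    card_split3 _ _
  have h1 := card_none_eq (G := G) e
  have h2t := card_some_eq (G := G) e true
  have h2f := card_some_eq (G := G) e false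
  have h3t : Nat.card {O' : {f : G.E // f ≠ e} → Option Bool //
        (G.contractEdge e).StronglyConnected O'} =
      Nat.card {O' : {f : G.E // f ≠ e} → Option Bool //
        (G.contractEdge e).StronglyConnected O' ∧ BadCut e O' true} +
      Nat.card {O' : {f : G.E // f ≠ e} → Option Bool //
        (G.contractEdge e).StronglyConnected O' ∧ ¬ BadCut e O' true} :=
    card_and_split _ _
  have h3f : Nat.card {O' : {f : G.E // f ≠ e} → Option Bool //
        (G.contractEdge e).StronglyConnected O'} =
      Nat.card {O' : {f : G.E // f ≠ e} → Option Bool //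
        (G.contractEdge e).StronglyConnected O' ∧ BadCut e O' false} +
      Nat.card {O' : {f : G.E // f ≠ e} → Option Bool //
        (G.contractEdge e).StronglyConnected O' ∧ ¬ BadCut e O' false} :=
    card_and_split _ _
  have h4 : Nat.card {O' : {f : G.E // f ≠ e} → Option Bool //
        (G.contractEdge e).StronglyConnected O' ∧ (BadCut e O' true ∨ BadCut e O' false)} =
      Nat.card {O' : {f : G.E // f ≠ e} → Option Bool //
        (G.contractEdge e).StronglyConnected O' ∧ BadCut e O' true} +
      Nat.card {O' : {f : G.E // f ≠ e} → Option Bool //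
        (G.contractEdge e).StronglyConnected O' ∧ BadCut e O' false} :=
    card_or_split _ _ _ (fun O' hp hq hr => badCut_disjoint hG hbr hp ⟨hq, hr⟩)
  have h5 : Nat.card {O' : {f : G.E // f ≠ e} → Option Bool //
        (G.contractEdge e).StronglyConnected O' ∧ (BadCut e O' true ∨ BadCut e O' false)} =
      Nat.card {O' : {f : G.E // f ≠ e} → Option Bool //
        (G.contractEdge e).StronglyConnected O' ∧ ¬ (G.deleteEdge e).StronglyConnected O'} := by
    refine Nat.card_congr (Equiv.subtypeEquivRight fun O' => ⟨?_, ?_⟩)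
    · rintro ⟨hp, hor⟩
      exact ⟨hp, hor.elim (badCut_not_strong_delete hbr) (badCut_not_strong_delete hbr)⟩
    · rintro ⟨hp, hnd⟩
      exact ⟨hp, badCut_of_not_strong_delete hp hnd⟩
  have h6 : Nat.card {O' : {f : G.E // f ≠ e} → Option Bool //
        (G.contractEdge e).StronglyConnected O'} =
      Nat.card {O' : {f : G.E // f ≠ e} → Option Bool //
        (G.contractEdge e).StronglyConnected O' ∧ (G.deleteEdge e).StronglyConnected O'} +
      Nat.card {O' : {f : G.E // f ≠ e} → Option Bool //
        (G.contractEdge e).StronglyConnected O' ∧ ¬ (G.deleteEdge e).StronglyConnected O'} :=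
    card_and_split _ _
  have h7 : Nat.card {O' : {f : G.E // f ≠ e} → Option Bool //
        (G.contractEdge e).StronglyConnected O' ∧ (G.deleteEdge e).StronglyConnected O'} =
      Nat.card {O' : {f : G.E // f ≠ e} → Option Bool //
        (G.deleteEdge e).StronglyConnected O'} :=
    Nat.card_congr (Equiv.subtypeEquivRight fun O' => ⟨fun h => h.2, fun h =>
      ⟨strong_delete_to_contract h, h⟩⟩)
  have hns : G.numStrong = Nat.card {O : G.PartialOrientation // G.StronglyConnected O} := rfl
  rw [hns]
  rw [numStrong_delete_eq e]
  rw [numStrong_contract_eq e]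
  linarith

theorem count_bridge (hbr : G.IsBridge e) :
    G.numStrong = (G.contractEdge e).numStrong := by
  have hns : G.numStrong = Nat.card {O : G.PartialOrientation // G.StronglyConnected O} := rfl
  rw [hns, numStrong_contract_eq e]
  refine Nat.card_congr ⟨fun s => ⟨restrictPO e s.1,
      (strong_ext_none _).mp (by rw [ext_restrict (strong_e_none hbr s.2)]; exact s.2)⟩,
    fun s => ⟨extPO e s.1 none, (strong_ext_none s.1).mpr s.2⟩,
    fun s => Subtype.ext (ext_restrict (strong_e_none hbr s.2)),
    fun s => Subtype.ext (restrict_ext s.1 none)⟩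

theorem count_loop (hloop : G.IsLoop e) :
    G.numStrong = 3 * (G.deleteEdge e).numStrong := by
  have hns : G.numStrong = Nat.card {O : G.PartialOrientation // G.StronglyConnected O} := rfl
  rw [hns, numStrong_delete_eq e]
  have hequiv : {O : G.PartialOrientation // G.StronglyConnected O} ≃
      ({O' : {f : G.E // f ≠ e} → Option Bool //
        (G.deleteEdge e).StronglyConnected O'} × Option Bool) := by
    refine ⟨fun s => (⟨restrictPO e s.1,
        (strong_loop hloop _ (s.1 e)).mp (by rw [ext_restrict rfl]; exact s.2)⟩, s.1 e),
      fun p => ⟨extPO e p.1.1 p.2, (strong_loop hloop p.1.1 p.2).mpr p.1.2⟩,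
      fun s => Subtype.ext (ext_restrict rfl), ?_⟩
    rintro ⟨⟨O', h'⟩, x⟩
    have h1 : restrictPO e (extPO e O' x) = O' := restrict_ext O' x
    have h2 : extPO e O' x e = x := extPO_e O' x
    exact Prod.ext (Subtype.ext h1) h2
  rw [Nat.card_congr hequiv, Nat.card_prod, Nat.card_eq_fintype_card (α := Option Bool)]
  simp [mul_comm]

end Count2


section Main

theorem numStrong_isEmpty {G : Multigraph} (hE : IsEmpty G.E) : G.numStrong = 1 := by
  have hO : ∀ O : G.PartialOrientation, G.StronglyConnected O := by
    rintro O ⟨X, ⟨f, _⟩, _⟩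
    exact hE.elim f
  rw [numStrong, Nat.card_eq_one_iff_unique]
  constructor
  · refine ⟨fun a b => Subtype.ext (funext fun f => hE.elim f)⟩
  · exact ⟨⟨fun f => hE.elim f, hO _⟩⟩

theorem phiZ_isEmpty {G : Multigraph} (hE : IsEmpty G.E) (hG : G.Connected)
    (hV : Nonempty G.V) : phiZ G = -1 := by
  haveI := hV
  have hS : ∀ S : Finset G.E, S = (∅ : Finset G.E) :=
    fun S => Finset.eq_empty_of_forall_notMem (fun x _ => hE.elim x)
  have huniv : (Finset.univ : Finset (Finset G.E)) = {∅} := by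
    ext S
    simp only [Finset.mem_univ, Finset.mem_singleton, true_iff]
    exact hS S
  rw [phiZ, huniv, Finset.sum_singleton]
  have hset : (↑(∅ : Finset G.E) : Set G.E) = (Set.univ : Set G.E) := by
    ext f
    exact hE.elim f
  rw [Finset.card_empty, hset, comps_univ_eq_one hG]
  norm_num

theorem main_aux : ∀ (n : ℕ) (G : Multigraph), Fintype.card G.E = n → G.Connected →
    Nonempty G.V → (G.numStrong : ℤ) = - phiZ G := by
  intro n
  induction n using Nat.strong_induction_on with
  | _ n ih =>
    intro G hcard hG hV
    by_cases hE : IsEmpty G.E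
    · rw [numStrong_isEmpty hE, phiZ_isEmpty hE hG hV]
      norm_num
    · obtain ⟨e⟩ := not_isEmpty_iff.mp hE
      haveI : Nonempty G.E := ⟨e⟩
      have hn1 : 1 ≤ n := by
        rw [← hcard]
        exact Fintype.card_pos
      have hlt : n - 1 < n := by omega
      have hcard' : Fintype.card {f : G.E // f ≠ e} = n - 1 := by
        rw [Fintype.card_subtype_compl, hcard, Fintype.card_subtype_eq]
      have hcdel : Fintype.card (G.deleteEdge e).E = n - 1 := by
        rw [← Nat.card_eq_fintype_card]
        rw [show Nat.card (G.deleteEdge e).E = Nat.card {f : G.E // f ≠ e} from rfl]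
        rw [Nat.card_eq_fintype_card, hcard']
      have hccon : Fintype.card (G.contractEdge e).E = n - 1 := by
        rw [← Nat.card_eq_fintype_card]
        rw [show Nat.card (G.contractEdge e).E = Nat.card {f : G.E // f ≠ e} from rfl]
        rw [Nat.card_eq_fintype_card, hcard']
      have hVdel : Nonempty (G.deleteEdge e).V := hV
      have hVcon : Nonempty (G.contractEdge e).V := ⟨Quot.mk _ hV.some⟩
      by_cases hloop : G.IsLoop e
      · have hconn := connected_delete hG (Or.inl hloop)
        have ihdel := ih (n - 1) hlt (G.deleteEdge e) hcdel hconn hVdel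
        rw [count_loop hloop, phiZ_rec e, phiZ_loop hloop]
        push_cast
        linarith
      · by_cases hbr : G.IsBridge e
        · have hconn := connected_contract (e := e) hG
          have ihcon := ih (n - 1) hlt (G.contractEdge e) hccon hconn hVcon
          rw [count_bridge hbr, phiZ_rec e, phiZ_bridge hbr]
          linarith
        · have hconnd := connected_delete hG (Or.inr hbr)
          have hconnc := connected_contract (e := e) hG
          have ihdel := ih (n - 1) hlt (G.deleteEdge e) hcdel hconnd hVdel
          have ihcon := ih (n - 1) hlt (G.contractEdge e) hccon hconnc hVcon
          rw [count_ordinary hG hbr, phiZ_rec e]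
          push_cast
          linarith

theorem tutte_eq (G : Multigraph) (hV : Nonempty G.V) (hG : G.Connected) :
    (2 : ℚ) ^ (Fintype.card G.V - 1) * G.tutte (1/2) 3 = - ((phiZ G : ℤ) : ℚ) := by
  haveI := hV
  rw [tutte, phiZ, Finset.mul_sum]
  push_cast
  rw [← Finset.sum_neg_distrib]
  refine Finset.sum_congr rfl fun S _ => ?_
  have hc1 : 1 ≤ G.comps (↑S : Set G.E) := comps_pos _
  have hcn : G.comps (↑S : Set G.E) ≤ Fintype.card G.V := comps_le_card _
  have hnk : Fintype.card G.V ≤ S.card + G.comps (↑S : Set G.E) := card_le_card_add_comps S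
  have hrkuniv : G.rk Set.univ = Fintype.card G.V - 1 := by
    rw [rk, comps_univ_eq_one hG]
  have hrkS : G.rk (↑S : Set G.E) = Fintype.card G.V - G.comps (↑S : Set G.E) := rfl
  set n := Fintype.card G.V
  set c := G.comps (↑S : Set G.E)
  set k := S.card
  have e1 : G.rk Set.univ - G.rk (↑S : Set G.E) = c - 1 := by
    rw [hrkuniv, hrkS]
    omega
  have e2 : k - G.rk (↑S : Set G.E) = k - (n - c) := by rw [hrkS]
  rw [e1, e2]
  have hx : (1 / 2 - 1 : ℚ) = -2⁻¹ := by norm_num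
  have hy : (3 - 1 : ℚ) = 2 := by norm_num
  rw [hx, hy, neg_pow, inv_pow]
  have hcc : ((-1 : ℚ)) ^ c = -(-1) ^ (c - 1) := by
    conv_lhs => rw [show c = (c - 1) + 1 by omega]
    rw [pow_succ]
    ring
  rw [hcc]
  have hpow : (2 : ℚ) ^ (n - 1) * 2 ^ (k - (n - c)) = 2 ^ (c - 1) * 2 ^ k := by
    rw [← pow_add, ← pow_add]
    congr 1
    omega
  have h2 : ((2 : ℚ) ^ (c - 1)) ≠ 0 := by positivity
  field_simp
  linear_combination hpow

end Main

end Multigraph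

/-- the number of strongly connected partial orientations of a connected
multigraph is `2^(n-1) · T(1/2, 3)`. -/
theorem stmt4 (G : Multigraph) (hG : G.Connected) :
    (G.numStrong : ℚ) = 2 ^ (Fintype.card G.V - 1) * G.tutte (1/2) 3 := by
  by_cases hV : Nonempty G.V
  · have h1 := Multigraph.main_aux (Fintype.card G.E) G rfl hG hV
    have h2 := Multigraph.tutte_eq G hV hG
    rw [h2]
    exact_mod_cast h1
  · haveI hVe : IsEmpty G.V := not_nonempty_iff.mp hV
    haveI hEe : IsEmpty G.E := ⟨fun e => hVe.false (G.fst e)⟩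
    rw [Multigraph.numStrong_isEmpty hEe]
    have hv0 : Fintype.card G.V = 0 := Fintype.card_eq_zero
    have hS : ∀ S : Finset G.E, S = ∅ :=
      fun S => Finset.eq_empty_of_forall_notMem (fun x _ => hEe.elim x)
    have huniv : (Finset.univ : Finset (Finset G.E)) = {∅} := by
      ext S
      simp only [Finset.mem_univ, Finset.mem_singleton, true_iff]
      exact hS S
    rw [Multigraph.tutte, huniv, Finset.sum_singleton]
    have hrk : ∀ T : Set G.E, G.rk T = 0 := fun T => by
      rw [Multigraph.rk, hv0]
      omega
    rw [hrk, hrk, hv0]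
    norm_num
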